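/- MSD is equivalent to preference by all reverse S-shaped utilities, in one direction: if X ⪰ Y (the integral conditions of Proposition 1 hold with reference point r), then for every non-decreasing function u: [a,b] → ℝ that is concave on [a,r] and convex on [r,b] and twice continuously differentiable on (a,r) and (r,b), we have E[u(X)] ≥ E[u(Y)]. -/

import Mathlib

open MeasureTheory

/-- The CDF of a discrete random variable with values `x` and probabilities `p`. -/
noncomputable def cdf16 (n : ℕ) (p x : Fin n → ℝ) (t : ℝ) : ℝ :=
  ∑ i ∈ Finset.univ.filter (fun i => x i ≤ t), p i

private lemma aux_chain16 (s : ℕ → ℝ) (N : ℕ) (h : ∀ j, j+1 < N → s (j+1) ≤ s j) :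
    ∀ i j, i ≤ j → j < N → s j ≤ s i := by
  intro i j hij
  refine Nat.le_induction (fun _ => le_rfl) (fun k hk ih hN => ?_) j hij
  exact (h k hN).trans (ih (Nat.lt_of_succ_lt hN))

private lemma aux_L116 : ∀ (N : ℕ) (D s : ℕ → ℝ),
    (∀ j, j+1 < N → s (j+1) ≤ s j) → (∀ j, j < N → 0 ≤ s j) →
    (∀ k, k ≤ N → 0 ≤ ∑ j ∈ Finset.range k, D j) →
    0 ≤ ∑ j ∈ Finset.range N, D j * s j := by
  intro N
  induction N with
  | zero => simp
  | succ N ih =>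
    intro D s hmono hpos hG
    have key : ∑ j ∈ Finset.range (N+1), D j * s j
        = (∑ j ∈ Finset.range N, D j * (s j - s N)) + s N * ∑ j ∈ Finset.range (N+1), D j := by
      calc ∑ j ∈ Finset.range (N+1), D j * s j
          = ∑ j ∈ Finset.range (N+1), (D j * (s j - s N) + s N * D j) :=
            Finset.sum_congr rfl (fun j _ => by ring)
        _ = ∑ j ∈ Finset.range (N+1), D j * (s j - s N) + ∑ j ∈ Finset.range (N+1), s N * D j :=
            Finset.sum_add_distrib
        _ = ∑ j ∈ Finset.range N, D j * (s j - s N) + s N * ∑ j ∈ Finset.range (N+1), D j := by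
            rw [Finset.sum_range_succ (f := fun j => D j * (s j - s N)), ← Finset.mul_sum]; ring
    rw [key]
    have h1 : 0 ≤ ∑ j ∈ Finset.range N, D j * (s j - s N) := by
      refine ih _ _ (fun j hj => by have := hmono j (by omega); linarith)
        (fun j hj => ?_) (fun k hk => hG k (by omega))
      have := aux_chain16 s (N+1) hmono j N (by omega) (by omega)
      linarith
    have h2 : 0 ≤ s N * ∑ j ∈ Finset.range (N+1), D j :=
      mul_nonneg (hpos N (by omega)) (hG (N+1) le_rfl)
    linarith

/-- If X ⪰ Y (the integral MSD conditions of Proposition 1 with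
reference point r), then for every non-decreasing u : [a,b] → ℝ that is concave
on [a,r], convex on [r,b], and twice continuously differentiable on (a,r) and
(r,b), we have E[u(X)] ≥ E[u(Y)]. -/
theorem stmt_16 (n : ℕ) (p x y : Fin n → ℝ) (a b r : ℝ)
    (hp : ∀ i, 0 ≤ p i) (hsum : ∑ i, p i = 1)
    (hx : ∀ i, x i ∈ Set.Icc a b) (hy : ∀ i, y i ∈ Set.Icc a b)
    (hr : r ∈ Set.Icc a b)
    (hgain : ∀ t ∈ Set.Icc r b, 0 ≤ ∫ τ in t..b, (cdf16 n p y τ - cdf16 n p x τ))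
    (hloss : ∀ t ∈ Set.Icc a r, 0 ≤ ∫ τ in a..t, (cdf16 n p y τ - cdf16 n p x τ)) :
    ∀ u : ℝ → ℝ, MonotoneOn u (Set.Icc a b) →
      ConcaveOn ℝ (Set.Icc a r) u → ConvexOn ℝ (Set.Icc r b) u →
      ContDiffOn ℝ 2 u (Set.Ioo a r) → ContDiffOn ℝ 2 u (Set.Ioo r b) →
      ∑ i, p i * u (y i) ≤ ∑ i, p i * u (x i) := by
  classical
  intro u hu hconc hconv _ _
  have hab : a ≤ b := hr.1.trans hr.2
  set Δ : ℝ → ℝ := fun τ => cdf16 n p y τ - cdf16 n p x τ with hΔdef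
  set S : Finset ℝ := ((Finset.univ.image x ∪ Finset.univ.image y) ∪ {a, r, b}) with hSdef
  have haS : a ∈ S := by simp [hSdef]
  have hbS : b ∈ S := by simp [hSdef]
  have hrS : r ∈ S := by simp [hSdef]
  have hxS : ∀ i, x i ∈ S := fun i => by
    simp only [hSdef, Finset.mem_union, Finset.mem_image]
    exact Or.inl (Or.inl ⟨i, Finset.mem_univ i, rfl⟩)
  have hyS : ∀ i, y i ∈ S := fun i => by
    simp only [hSdef, Finset.mem_union, Finset.mem_image]
    exact Or.inl (Or.inr ⟨i, Finset.mem_univ i, rfl⟩)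
  have hSab : ∀ c ∈ S, a ≤ c ∧ c ≤ b := by
    intro c hc
    simp only [hSdef, Finset.mem_union, Finset.mem_image, Finset.mem_insert,
      Finset.mem_singleton] at hc
    rcases hc with ((⟨i, _, rfl⟩ | ⟨i, _, rfl⟩) | (rfl | rfl | rfl))
    · exact ⟨(hx i).1, (hx i).2⟩
    · exact ⟨(hy i).1, (hy i).2⟩
    · exact ⟨le_rfl, hab⟩
    · exact ⟨hr.1, hr.2⟩
    · exact ⟨hab, le_rfl⟩
  set m := S.card with hmdef
  have hm0 : 0 < m := Finset.card_pos.2 ⟨a, haS⟩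
  set e := S.orderIsoOfFin hmdef.symm with hedef
  set t : ℕ → ℝ := fun j => if h : j < m then (e ⟨j, h⟩ : ℝ) else b with htdef
  have ht_mem : ∀ j, j < m → t j ∈ S := by
    intro j h
    simp only [htdef, dif_pos h]
    exact (e ⟨j, h⟩).2
  have ht_lt : ∀ {i j : ℕ}, i < j → j < m → t i < t j := by
    intro i j hij hj
    have hi : i < m := hij.trans hj
    simp only [htdef, dif_pos hi, dif_pos hj]
    exact Subtype.coe_lt_coe.2 (e.lt_iff_lt.2 hij)
  have ht_le : ∀ {i j : ℕ}, i ≤ j → j < m → t i ≤ t j := by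
    intro i j hij hj
    rcases hij.lt_or_eq with h | h
    · exact (ht_lt h hj).le
    · exact le_of_eq (by rw [h])
  have ht_surj : ∀ c ∈ S, ∃ j, ∃ _ : j < m, t j = c := by
    intro c hc
    refine ⟨(e.symm ⟨c, hc⟩).1, (e.symm ⟨c, hc⟩).2, ?_⟩
    simp only [htdef, dif_pos (e.symm ⟨c, hc⟩).2]
    have : (⟨(e.symm ⟨c, hc⟩).1, (e.symm ⟨c, hc⟩).2⟩ : Fin m) = e.symm ⟨c, hc⟩ := rfl
    rw [this, OrderIso.apply_symm_apply]
  obtain ⟨K, hK, htK⟩ := ht_surj r hrS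
  obtain ⟨j0, hj0, htj0⟩ := ht_surj a haS
  obtain ⟨jb, hjb, htjb⟩ := ht_surj b hbS
  have t0 : t 0 = a := by
    have h1 : a ≤ t 0 := (hSab _ (ht_mem 0 hm0)).1
    have h2 : t 0 ≤ t j0 := ht_le (Nat.zero_le _) hj0
    rw [htj0] at h2; linarith
  have tlast : t (m - 1) = b := by
    have h1 : t (m - 1) ≤ b := (hSab _ (ht_mem (m-1) (by omega))).2
    have h2 : t jb ≤ t (m - 1) := ht_le (by omega) (by omega)
    rw [htjb] at h2; linarith
  have gap : ∀ c ∈ S, ∀ j, j + 1 < m → c < t (j+1) → c ≤ t j := by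
    intro c hc j hj hcj
    obtain ⟨j', hj', rfl⟩ := ht_surj c hc
    have hle : j' ≤ j := by
      by_contra h
      push_neg at h
      have := ht_le h hj'
      linarith
    exact ht_le hle (by omega)
  -- cdf facts
  have hcdf_mono : ∀ z : Fin n → ℝ, Monotone (cdf16 n p z) := by
    intro z t1 t2 h12
    apply Finset.sum_le_sum_of_subset_of_nonneg
    · intro i hi
      simp only [Finset.mem_filter] at *
      exact ⟨hi.1, hi.2.trans h12⟩
    · intro i _ _; exact hp i
  have hInt : ∀ c d : ℝ, IntervalIntegrable Δ volume c d := by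
    intro c d
    rw [hΔdef]
    exact ((hcdf_mono y).intervalIntegrable).sub ((hcdf_mono x).intervalIntegrable)
  have hconstz : ∀ (z : Fin n → ℝ), (∀ i, z i ∈ S) → ∀ j, j + 1 < m →
      ∀ τ ∈ Set.Ioo (t j) (t (j+1)), cdf16 n p z τ = cdf16 n p z (t j) := by
    intro z hzS j hj τ hτ
    unfold cdf16
    congr 1
    ext i
    simp only [Finset.mem_filter, Finset.mem_univ, true_and]
    constructor
    · intro h
      exact gap (z i) (hzS i) j hj (lt_of_le_of_lt h hτ.2)
    · intro h
      exact h.trans hτ.1.le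
  set D : ℕ → ℝ := fun j => Δ (t j) * (t (j+1) - t j) with hDdef
  have hint_eq : ∀ j, j + 1 < m → (∫ τ in (t j)..(t (j+1)), Δ τ) = D j := by
    intro j hj
    have hlt : t j < t (j+1) := ht_lt (Nat.lt_succ_self j) hj
    rw [intervalIntegral.integral_of_le hlt.le, MeasureTheory.integral_Ioc_eq_integral_Ioo]
    rw [MeasureTheory.setIntegral_congr_fun measurableSet_Ioo
      (fun τ hτ => show Δ τ = Δ (t j) by
        simp only [hΔdef]
        rw [hconstz y hyS j hj τ hτ, hconstz x hxS j hj τ hτ])]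
    rw [MeasureTheory.setIntegral_const, MeasureTheory.measureReal_def, Real.volume_Ioo, ENNReal.toReal_ofReal (by linarith)]
    simp only [hDdef, smul_eq_mul]
    ring
  have hT : ∀ k, K ≤ k → k ≤ m - 1 → 0 ≤ ∑ j ∈ Finset.Ico k (m-1), D j := by
    intro k hKk hk
    have hsum_int : ∑ j ∈ Finset.Ico k (m-1), ∫ τ in (t j)..(t (j+1)), Δ τ
        = ∫ τ in (t k)..(t (m-1)), Δ τ :=
      intervalIntegral.sum_integral_adjacent_intervals_Ico hk (fun j _ => hInt _ _)
    have heq : ∑ j ∈ Finset.Ico k (m-1), D j = ∫ τ in (t k)..b, Δ τ := by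
      rw [← tlast, ← hsum_int]
      refine Finset.sum_congr rfl fun j hj => ?_
      simp only [Finset.mem_Ico] at hj
      exact (hint_eq j (by omega)).symm
    rw [heq]
    have h1 : r ≤ t k := by rw [← htK]; exact ht_le hKk (by omega)
    have h2 : t k ≤ b := by rw [← tlast]; exact ht_le hk (by omega)
    exact hgain (t k) ⟨h1, h2⟩
  have hH : ∀ k, k ≤ K → 0 ≤ ∑ j ∈ Finset.range k, D j := by
    intro k hk
    have hkm : k < m := by omega
    have hsum_int : ∑ j ∈ Finset.Ico 0 k, ∫ τ in (t j)..(t (j+1)), Δ τ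
        = ∫ τ in (t 0)..(t k), Δ τ :=
      intervalIntegral.sum_integral_adjacent_intervals_Ico (Nat.zero_le k) (fun j _ => hInt _ _)
    have heq : ∑ j ∈ Finset.range k, D j = ∫ τ in a..(t k), Δ τ := by
      rw [← t0, Finset.range_eq_Ico, ← hsum_int]
      refine Finset.sum_congr rfl fun j hj => ?_
      simp only [Finset.mem_Ico] at hj
      exact (hint_eq j (by omega)).symm
    rw [heq]
    have h1 : a ≤ t k := by rw [← t0]; exact ht_le (Nat.zero_le _) hkm
    have h2 : t k ≤ r := by rw [← htK]; exact ht_le hk hK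
    exact hloss (t k) ⟨h1, h2⟩
  -- telescoping
  have htel : ∀ c ∈ S, ∑ j ∈ Finset.range (m-1),
      (if c ≤ t j then (1:ℝ) else 0) * (u (t (j+1)) - u (t j)) = u b - u c := by
    intro c hc
    obtain ⟨jc, hjc, rfl⟩ := ht_surj c hc
    have hjc' : jc ≤ m - 1 := by omega
    have step : ∀ j ∈ Finset.range (m-1),
        (if t jc ≤ t j then (1:ℝ) else 0) * (u (t (j+1)) - u (t j))
          = u (t (max (j+1) jc)) - u (t (max j jc)) := by
      intro j hj
      simp only [Finset.mem_range] at hj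
      by_cases h : jc ≤ j
      · rw [if_pos (ht_le h (by omega)), Nat.max_eq_left (by omega), Nat.max_eq_left h, one_mul]
      · rw [if_neg (not_le.2 (ht_lt (by omega) hjc)), Nat.max_eq_right (by omega),
          Nat.max_eq_right (by omega), zero_mul, sub_self]
    rw [Finset.sum_congr rfl step, Finset.sum_range_sub (fun j => u (t (max j jc)))]
    rw [Nat.max_eq_left hjc', Nat.max_eq_right (Nat.zero_le _), tlast]
  have key : ∀ c ∈ S, ∀ q : ℝ, ∑ j ∈ Finset.range (m-1),
      (if c ≤ t j then q else 0) * (u (t (j+1)) - u (t j)) = q * (u b - u c) := by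
    intro c hc q
    rw [← htel c hc, Finset.mul_sum]
    exact Finset.sum_congr rfl fun j _ => by split_ifs <;> ring
  have hsplit : ∀ τ, Δ τ = ∑ i, ((if y i ≤ τ then p i else 0) - (if x i ≤ τ then p i else 0)) := by
    intro τ
    simp only [hΔdef]
    unfold cdf16
    rw [Finset.sum_filter, Finset.sum_filter, ← Finset.sum_sub_distrib]
  have main_id : ∑ j ∈ Finset.range (m-1), Δ (t j) * (u (t (j+1)) - u (t j))
      = ∑ i, p i * u (x i) - ∑ i, p i * u (y i) := by
    calc ∑ j ∈ Finset.range (m-1), Δ (t j) * (u (t (j+1)) - u (t j))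
        = ∑ j ∈ Finset.range (m-1), ∑ i,
            ((if y i ≤ t j then p i else 0) * (u (t (j+1)) - u (t j))
              - (if x i ≤ t j then p i else 0) * (u (t (j+1)) - u (t j))) := by
          refine Finset.sum_congr rfl fun j _ => ?_
          rw [hsplit, Finset.sum_mul]
          exact Finset.sum_congr rfl fun i _ => sub_mul _ _ _
      _ = ∑ i, ∑ j ∈ Finset.range (m-1),
            ((if y i ≤ t j then p i else 0) * (u (t (j+1)) - u (t j))
              - (if x i ≤ t j then p i else 0) * (u (t (j+1)) - u (t j))) :=
          Finset.sum_comm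
      _ = ∑ i, (p i * (u b - u (y i)) - p i * (u b - u (x i))) := by
          refine Finset.sum_congr rfl fun i _ => ?_
          rw [Finset.sum_sub_distrib, key (y i) (hyS i) (p i), key (x i) (hxS i) (p i)]
      _ = ∑ i, p i * u (x i) - ∑ i, p i * u (y i) := by
          rw [← Finset.sum_sub_distrib]
          exact Finset.sum_congr rfl fun i _ => by ring
  -- slopes
  set sl : ℕ → ℝ := fun j => (u (t (j+1)) - u (t j)) / (t (j+1) - t j) with hsldef
  have hmemab : ∀ j, j < m → t j ∈ Set.Icc a b :=
    fun j hj => ⟨(hSab _ (ht_mem j hj)).1, (hSab _ (ht_mem j hj)).2⟩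
  have hsl_nonneg : ∀ j, j + 1 < m → 0 ≤ sl j := by
    intro j hj
    have hlt : t j < t (j+1) := ht_lt (by omega) hj
    have hmono := hu (hmemab j (by omega)) (hmemab (j+1) hj) hlt.le
    exact div_nonneg (by linarith) (by linarith)
  have hsl_anti : ∀ j, j + 2 ≤ K → sl (j+1) ≤ sl j := by
    intro j hj
    have h2 : j + 2 < m := by omega
    have hmem1 : t j ∈ Set.Icc a r :=
      ⟨(hSab _ (ht_mem j (by omega))).1, by rw [← htK]; exact ht_le (show j ≤ K by omega) hK⟩
    have hmem2 : t (j+2) ∈ Set.Icc a r :=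
      ⟨(hSab _ (ht_mem (j+2) h2)).1, by rw [← htK]; exact ht_le hj hK⟩
    have := hconc.slope_anti_adjacent hmem1 hmem2
      (show t j < t (j+1) from ht_lt (by omega) (by omega))
      (show t (j+1) < t (j+2) from ht_lt (by omega) h2)
    simpa [hsldef] using this
  have hsl_mono : ∀ j, K ≤ j → j + 2 < m → sl j ≤ sl (j+1) := by
    intro j hKj hj
    have hmem1 : t j ∈ Set.Icc r b :=
      ⟨by rw [← htK]; exact ht_le hKj (by omega),
        by rw [← tlast]; exact ht_le (show j ≤ m - 1 by omega) (by omega)⟩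
    have hmem2 : t (j+2) ∈ Set.Icc r b :=
      ⟨by rw [← htK]; exact ht_le (show K ≤ j + 2 by omega) (by omega),
        by rw [← tlast]; exact ht_le (show j + 2 ≤ m - 1 by omega) (by omega)⟩
    have := hconv.slope_mono_adjacent hmem1 hmem2
      (show t j < t (j+1) from ht_lt (by omega) (by omega))
      (show t (j+1) < t (j+2) from ht_lt (by omega) hj)
    simpa [hsldef] using this
  -- final assembly
  have hterm : ∀ j ∈ Finset.range (m-1), Δ (t j) * (u (t (j+1)) - u (t j)) = D j * sl j := by
    intro j hj
    simp only [Finset.mem_range] at hj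
    have hlt : t j < t (j+1) := ht_lt (by omega) (by omega)
    have hne : t (j+1) - t j ≠ 0 := by linarith
    simp only [hDdef, hsldef]
    field_simp
  have hKm1 : K ≤ m - 1 := by omega
  suffices hfin : 0 ≤ ∑ j ∈ Finset.range (m-1), Δ (t j) * (u (t (j+1)) - u (t j)) by
    rw [main_id] at hfin; linarith
  rw [Finset.sum_congr rfl hterm, Finset.range_eq_Ico,
    ← Finset.sum_Ico_consecutive _ (Nat.zero_le K) hKm1]
  apply add_nonneg
  · rw [← Finset.range_eq_Ico]
    exact aux_L116 K D sl (fun j hj => hsl_anti j (by omega))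
      (fun j hj => hsl_nonneg j (by omega)) (fun k hk => hH k hk)
  · obtain ⟨M, hKM⟩ : ∃ M, m - 1 = K + M := ⟨m - 1 - K, by omega⟩
    rw [hKM] at hT
    rw [hKM, Finset.sum_Ico_eq_sum_range]
    have hMM : K + M - K = M := by omega
    rw [hMM, ← Finset.sum_range_reflect]
    refine aux_L116 M (fun i => D (K + (M - 1 - i))) (fun i => sl (K + (M - 1 - i)))
      (fun i hi => ?_) (fun i hi => ?_) (fun k hk => ?_)
    · show sl (K + (M - 1 - (i+1))) ≤ sl (K + (M - 1 - i))
      have h1 : K + (M - 1 - i) = (K + (M - 1 - (i+1))) + 1 := by omega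
      rw [h1]
      exact hsl_mono (K + (M - 1 - (i+1))) (by omega) (by omega)
    · exact hsl_nonneg (K + (M - 1 - i)) (by omega)
    · show 0 ≤ ∑ i ∈ Finset.range k, D (K + (M - 1 - i))
      have heq : ∑ i ∈ Finset.range k, D (K + (M - 1 - i))
          = ∑ j ∈ Finset.Ico (K + M - k) (K + M), D j := by
        rw [← Finset.sum_range_reflect, Finset.sum_Ico_eq_sum_range]
        have hc : (K + M) - (K + M - k) = k := by omega
        rw [hc]
        refine Finset.sum_congr rfl fun i hi => ?_
        simp only [Finset.mem_range] at hi
        congr 1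
        omega
      rw [heq]
      exact hT (K + M - k) (by omega) (by omega)
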